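/- Let K be a field, V a K-vector space of finite dimension n, and f : V → V a bijective K-linear endomorphism that is diagonalizable, i.e., the eigenspaces of f span V. For each μ ∈ K let a_μ denote the dimension of the μ-eigenspace of f. Then for every t ∈ K, the t-eigenspace of the induced endomorphism ⋀³f of the exterior cube ⋀³V satisfies 6 · dim (t-eigenspace of ⋀³f) ≤ n · ∑_μ a_μ² (the sum over the finitely many eigenvalues μ of f). -/

import Mathlib

/-- The linear map between `n`-th exterior powers induced functorially by a linear map
`f : M →ₗ[R] N` (the restriction of `ExteriorAlgebra.map f`). -/
noncomputable def exteriorPower.mapOld {R M N : Type*} [CommRing R] [AddCommGroup M] [Module R M]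
    [AddCommGroup N] [Module R N] (n : ℕ) (f : M →ₗ[R] N) :
    ⋀[R]^n M →ₗ[R] ⋀[R]^n N :=
  have key : ∀ m : ℕ, Submodule.map (ExteriorAlgebra.map f).toLinearMap (⋀[R]^m M) ≤ ⋀[R]^m N := by
    intro m
    rw [Submodule.map_pow, ExteriorAlgebra.ι_range_map_map]
    have h1 : Submodule.map (ExteriorAlgebra.ι R) (LinearMap.range f)
        ≤ LinearMap.range (ExteriorAlgebra.ι R (M := N)) := LinearMap.map_le_range
    induction m with
    | zero => simp
    | succ m ih =>
        calc Submodule.map (ExteriorAlgebra.ι R) (LinearMap.range f) ^ (m + 1)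
            = Submodule.map (ExteriorAlgebra.ι R) (LinearMap.range f) ^ m *
              Submodule.map (ExteriorAlgebra.ι R) (LinearMap.range f) := pow_succ _ m
          _ ≤ LinearMap.range (ExteriorAlgebra.ι R (M := N)) ^ m *
              LinearMap.range (ExteriorAlgebra.ι R (M := N)) := mul_le_mul' ih h1
          _ = ⋀[R]^(m + 1) N := (pow_succ _ m).symm
  (ExteriorAlgebra.map f).toLinearMap.restrict
    fun x hx => key n (Submodule.mem_map_of_mem hx)

theorem eig_le_span {K W : Type*} [Field K] [AddCommGroup W] [Module K W]
    {β : Type*} (v : β → W) (d : β → K) (g : Module.End K W)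
    (hv : ∀ i, g (v i) = d i • v i) (hspan : Submodule.span K (Set.range v) = ⊤) (t : K) :
    Module.End.eigenspace g t ≤ Submodule.span K (v '' {i | d i = t}) := by
  classical
  set S : K → Submodule K W := fun μ => Submodule.span K (v '' {i | d i = μ}) with hS
  have hSE : ∀ μ, S μ ≤ Module.End.eigenspace g μ := by
    intro μ
    rw [hS, Submodule.span_le]
    rintro _ ⟨i, hi, rfl⟩
    rw [SetLike.mem_coe, Module.End.mem_eigenspace_iff, hv i, hi]
  have hsup : (⨆ μ : K, S μ) = ⊤ := by
    rw [eq_top_iff, ← hspan, Submodule.span_le]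
    rintro _ ⟨i, rfl⟩
    exact Submodule.mem_iSup_of_mem (d i)
      (Submodule.subset_span ⟨i, rfl, rfl⟩)
  intro x hx
  have hx' : x ∈ ⨆ μ : K, S μ := hsup.symm ▸ Submodule.mem_top
  rw [Submodule.mem_iSup_iff_exists_finsupp] at hx'
  obtain ⟨F, hF, hFsum⟩ := hx'
  have key : x - F t ∈ Module.End.eigenspace g t ⊓ ⨆ μ : K, ⨆ _ : μ ≠ t, Module.End.eigenspace g μ := by
    constructor
    · exact Submodule.sub_mem _ hx (hSE t (hF t))
    · have : x - F t = (F.erase t).sum fun _ m => m := by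
        rw [← hFsum]
        rw [← Finsupp.add_sum_erase' F t (fun _ m => m) (fun _ => rfl)]
        abel
      rw [this]
      refine Submodule.sum_mem _ ?_
      intro μ hμ
      have hμt : μ ≠ t := by
        have := Finsupp.support_erase (a := t) (f := F) ▸ hμ
        exact Finset.ne_of_mem_erase this
      have : (F.erase t) μ = F μ := Finsupp.erase_ne hμt
      rw [this]
      exact Submodule.mem_iSup_of_mem μ (Submodule.mem_iSup_of_mem hμt (hSE μ (hF μ)))
  have hdisj := (Module.End.eigenspaces_iSupIndep g) (i := t)
  have : x - F t = 0 := by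
    rw [← Submodule.mem_bot (R := K)]
    exact hdisj.le_bot key
  have : x = F t := by rwa [sub_eq_zero] at this
  rw [this]
  exact hF t

/-- Let `f` be a bijective diagonalizable endomorphism of an `n`-dimensional `K`-vector
space `V`, with eigenvalues exactly the elements of the finite set `s`, and let `a_μ` be the
dimension of the `μ`-eigenspace of `f`. Then for every `t : K`, the `t`-eigenspace of the
induced endomorphism `⋀³f` of `⋀³V` satisfies `6 · dim ≤ n · ∑_μ a_μ²`. -/
theorem stmt5 {K V : Type*} [Field K] [AddCommGroup V] [Module K V] [FiniteDimensional K V]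
    (n : ℕ) (hn : Module.finrank K V = n)
    (f : Module.End K V) (hf : Function.Bijective f)
    (hdiag : (⨆ μ : K, f.eigenspace μ) = ⊤)
    (s : Finset K) (hs : ∀ μ : K, f.HasEigenvalue μ ↔ μ ∈ s) (t : K) :
    6 * Module.finrank K (Module.End.eigenspace (exteriorPower.mapOld 3 f) t) ≤
      n * ∑ μ ∈ s, Module.finrank K (f.eigenspace μ) ^ 2 := by
  classical
  set a : K → ℕ := fun μ => Module.finrank K (f.eigenspace μ) with ha
  set S : ℕ := ∑ μ ∈ s, a μ ^ 2 with hSdef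
  -- basic facts about eigenvalues
  have h0 : f.eigenspace 0 = ⊥ := by
    rw [Module.End.eigenspace_zero]
    exact LinearMap.ker_eq_bot.2 hf.injective
  have ha0 : a 0 = 0 := by
    show Module.finrank K (f.eigenspace 0) = 0
    rw [h0]; exact finrank_bot K V
  have haν : ∀ ν : K, ν ∉ s → a ν = 0 := by
    intro ν hν
    have : ¬ f.HasEigenvalue ν := fun h => hν ((hs ν).1 h)
    rw [Module.End.hasEigenvalue_iff, not_not] at this
    show Module.finrank K (f.eigenspace ν) = 0
    rw [this]; exact finrank_bot K V
  -- the eigenbasis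
  have hint : DirectSum.IsInternal f.eigenspace :=
    DirectSum.isInternal_submodule_of_iSupIndep_of_iSup_eq_top f.eigenspaces_iSupIndep hdiag
  let b0 : Module.Basis (Σ μ : K, Fin (a μ)) K V :=
    hint.collectedBasis (fun μ => Module.finBasis K (f.eigenspace μ))
  letI : Fintype (Σ μ : K, Fin (a μ)) := FiniteDimensional.fintypeBasisIndex b0
  have hb0 : ∀ i : (Σ μ : K, Fin (a μ)), f (b0 i) = i.1 • b0 i := by
    intro i
    have := hint.collectedBasis_mem (fun μ => Module.finBasis K (f.eigenspace μ)) i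
    rwa [Module.End.mem_eigenspace_iff] at this
  have hcard : Fintype.card (Σ μ : K, Fin (a μ)) = n := by
    rw [← Module.finrank_eq_card_basis b0, hn]
  have hcs : ∀ i : (Σ μ : K, Fin (a μ)), i.1 ∈ s := by
    intro i
    refine (hs i.1).1 ?_
    rw [Module.End.hasEigenvalue_iff]
    intro hbot
    have h1 : a i.1 = 0 := by
      show Module.finrank K (f.eigenspace i.1) = 0
      rw [hbot]; exact finrank_bot K V
    have h2 := i.2.isLt
    omega
  have h0s : (0 : K) ∉ s := by
    intro h
    have := (hs 0).2 h
    rw [Module.End.hasEigenvalue_iff] at this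
    exact this h0
  have hc0 : ∀ i : (Σ μ : K, Fin (a μ)), i.1 ≠ 0 := fun i hi => h0s (hi ▸ hcs i)
  -- counting fibers
  have fib0 : ∀ ν : K, Fintype.card {i : Σ μ : K, Fin (a μ) // i.1 = ν} = a ν := by
    intro ν
    have e : {i : Σ μ : K, Fin (a μ) // i.1 = ν} ≃ Fin (a ν) :=
      { toFun := fun x => Fin.cast (congrArg a x.2) x.1.2
        invFun := fun j => ⟨⟨ν, j⟩, rfl⟩
        left_inv := by rintro ⟨⟨μ, j⟩, rfl⟩; rfl
        right_inv := fun j => rfl }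
    rw [Fintype.card_congr e, Fintype.card_fin]
  -- reindex the basis by `Fin n`
  let e : (Σ μ : K, Fin (a μ)) ≃ Fin n := (Fintype.equivFin _).trans (finCongr hcard)
  let b : Module.Basis (Fin n) K V := b0.reindex e
  let c : Fin n → K := fun i => (e.symm i).1
  have hb : ∀ i, f (b i) = c i • b i := by
    intro i
    show f (b0.reindex e i) = c i • b0.reindex e i
    rw [Module.Basis.reindex_apply]
    exact hb0 _
  have hcs' : ∀ i, c i ∈ s := fun i => hcs _
  have hc0' : ∀ i, c i ≠ 0 := fun i => hc0 _
  have fib : ∀ ν : K, Fintype.card {i : Fin n // c i = ν} = a ν := by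
    intro ν
    rw [← fib0 ν]
    exact Fintype.card_congr (Equiv.subtypeEquiv e.symm (fun i => Iff.rfl))
  -- grouping sums over the basis index
  have hgroup : ∀ F : K → ℕ, ∑ i : Fin n, F (c i) ≤ ∑ μ ∈ s, a μ * F μ := by
    intro F
    have h1 : ∑ μ ∈ s, ∑ i ∈ Finset.univ.filter (fun i : Fin n => c i = μ), F (c i)
        = ∑ i : Fin n, F (c i) :=
      Finset.sum_fiberwise_of_maps_to (fun i _ => hcs' i) _
    rw [← h1]
    refine Finset.sum_le_sum ?_
    intro μ _
    have hcongr : ∑ i ∈ Finset.univ.filter (fun i : Fin n => c i = μ), F (c i)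
        = ∑ _i ∈ Finset.univ.filter (fun i : Fin n => c i = μ), F μ :=
      Finset.sum_congr rfl (fun i hi => by rw [(Finset.mem_filter.1 hi).2])
    rw [hcongr, Finset.sum_const, smul_eq_mul, ← Fintype.card_subtype, fib μ]
  -- the pair bound
  have hsq : ∀ u : K, ∑ μ ∈ s, a (μ⁻¹ * u) ^ 2 ≤ S := by
    intro u
    by_cases hu : u = 0
    · subst hu
      simp [ha0]
    · have hinj : Set.InjOn (fun μ : K => μ⁻¹ * u) s := by
        intro μ hμ ν hν hμν
        have := mul_right_cancel₀ hu hμν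
        exact inv_injective this
      have himg : ∑ ν ∈ s.image (fun μ : K => μ⁻¹ * u), a ν ^ 2
          = ∑ μ ∈ s, a (μ⁻¹ * u) ^ 2 :=
        Finset.sum_image (fun x hx y hy h => hinj (Finset.mem_coe.2 hx) (Finset.mem_coe.2 hy) h)
      rw [← himg]
      have step : ∑ ν ∈ s.image (fun μ : K => μ⁻¹ * u), a ν ^ 2
          = ∑ ν ∈ (s.image (fun μ : K => μ⁻¹ * u)) ∩ s, a ν ^ 2 := by
        refine (Finset.sum_subset Finset.inter_subset_left ?_).symm
        intro ν hν hν'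
        have : ν ∉ s := fun h => hν' (Finset.mem_inter.2 ⟨hν, h⟩)
        rw [haν ν this]; ring
      rw [step]
      exact Finset.sum_le_sum_of_subset Finset.inter_subset_right
  have hpair : ∀ u : K, Fintype.card {p : Fin n × Fin n // c p.1 * c p.2 = u} ≤ S := by
    intro u
    have hc1 : Fintype.card {p : Fin n × Fin n // c p.1 * c p.2 = u}
        = ∑ i : Fin n, Fintype.card {k : Fin n // c i * c k = u} := by
      rw [← Fintype.card_sigma]
      exact Fintype.card_congr (Equiv.subtypeProdEquivSigmaSubtype
        (fun (i k : Fin n) => c i * c k = u))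
    rw [hc1]
    have e2 : ∀ i : Fin n, Fintype.card {k : Fin n // c i * c k = u} = a ((c i)⁻¹ * u) := by
      intro i
      have he : {k : Fin n // c i * c k = u} ≃ {k : Fin n // c k = (c i)⁻¹ * u} :=
        Equiv.subtypeEquivRight (fun k => by
          constructor
          · intro h; rw [← h, inv_mul_cancel_left₀ (hc0' i)]
          · intro h; rw [h, mul_inv_cancel_left₀ (hc0' i)])
      exact (Fintype.card_congr he).trans (fib _)
    rw [Finset.sum_congr rfl (fun i _ => e2 i)]
    have h1 : ∑ i : Fin n, a ((c i)⁻¹ * u) ≤ ∑ μ ∈ s, a μ * a (μ⁻¹ * u) :=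
      hgroup (fun ν => a (ν⁻¹ * u))
    refine h1.trans ?_
    have h2 : 2 * ∑ μ ∈ s, a μ * a (μ⁻¹ * u) ≤ 2 * S := by
      calc 2 * ∑ μ ∈ s, a μ * a (μ⁻¹ * u) = ∑ μ ∈ s, 2 * (a μ * a (μ⁻¹ * u)) := by
            rw [Finset.mul_sum]
        _ ≤ ∑ μ ∈ s, (a μ ^ 2 + a (μ⁻¹ * u) ^ 2) := by
            refine Finset.sum_le_sum (fun μ _ => ?_)
            have := two_mul_le_add_sq (a μ) (a (μ⁻¹ * u))
            nlinarith
        _ = S + ∑ μ ∈ s, a (μ⁻¹ * u) ^ 2 := by rw [Finset.sum_add_distrib]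
        _ ≤ S + S := Nat.add_le_add_left (hsq u) S
        _ = 2 * S := by ring
    omega
  -- the wedge vectors
  let w : (Fin 3 → Fin n) → ⋀[K]^3 V := fun j =>
    ⟨ExteriorAlgebra.ιMulti K 3 (fun k => b (j k)),
     ExteriorAlgebra.ιMulti_range K 3 (Set.mem_range_self _)⟩
  have hcoe : ∀ x : ⋀[K]^3 V, ((exteriorPower.mapOld 3 f) x : ExteriorAlgebra K V)
      = ExteriorAlgebra.map f (x : ExteriorAlgebra K V) := fun x => rfl
  have heig : ∀ j : Fin 3 → Fin n,
      exteriorPower.mapOld 3 f (w j) = (∏ k, c (j k)) • w j := by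
    intro j
    apply Subtype.ext
    rw [hcoe]
    show (ExteriorAlgebra.map f : ExteriorAlgebra K V →ₐ[K] ExteriorAlgebra K V)
      (ExteriorAlgebra.ιMulti K 3 fun k => b (j k)) = _
    rw [ExteriorAlgebra.map_apply_ιMulti]
    have h1 : (⇑f ∘ fun k => b (j k)) = fun k => c (j k) • b (j k) := by
      funext k; exact hb (j k)
    rw [h1]
    have hms := MultilinearMap.map_smul_univ
      (ExteriorAlgebra.ιMulti K 3 (M := V)).toMultilinearMap
      (fun k => c (j k)) (fun k => b (j k))
    simp only [AlternatingMap.coe_multilinearMap] at hms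
    rw [hms]
    rfl
  -- spanning by strictly monotone wedges
  have hWle : (⋀[K]^3 V : Submodule K (ExteriorAlgebra K V)) ≤
      Submodule.span K (Set.range fun j : {j : Fin 3 → Fin n // StrictMono j} =>
        (ExteriorAlgebra.ιMulti K 3 fun k => b (j.1 k))) := by
    rw [← ExteriorAlgebra.ιMulti_span_fixedDegree, Submodule.span_le]
    rintro _ ⟨v, rfl⟩
    have h1 : v = fun k => ∑ i : Fin n, b.repr (v k) i • b i := by
      funext k; exact (b.sum_repr (v k)).symm
    have hv : ExteriorAlgebra.ιMulti K 3 v = ∑ j : Fin 3 → Fin n,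
        (∏ k, b.repr (v k) (j k)) • ExteriorAlgebra.ιMulti K 3 (fun k => b (j k)) := by
      calc ExteriorAlgebra.ιMulti K 3 v
          = ExteriorAlgebra.ιMulti K 3 (fun k => ∑ i : Fin n,
              b.repr (v k) i • b i) := by rw [← h1]
        _ = ∑ j : Fin 3 → Fin n, ExteriorAlgebra.ιMulti K 3
              (fun k => b.repr (v k) (j k) • b (j k)) := by
            have := MultilinearMap.map_sum
              (ExteriorAlgebra.ιMulti K 3 (M := V)).toMultilinearMap
              (fun k (i : Fin n) => b.repr (v k) i • b i)
            simpa only [AlternatingMap.coe_multilinearMap] using this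
        _ = ∑ j : Fin 3 → Fin n,
              (∏ k, b.repr (v k) (j k)) • ExteriorAlgebra.ιMulti K 3 (fun k => b (j k)) := by
            refine Finset.sum_congr rfl (fun j _ => ?_)
            have := MultilinearMap.map_smul_univ
              (ExteriorAlgebra.ιMulti K 3 (M := V)).toMultilinearMap
              (fun k => b.repr (v k) (j k)) (fun k => b (j k))
            simpa only [AlternatingMap.coe_multilinearMap] using this
    rw [hv]
    refine Submodule.sum_mem _ (fun j _ => Submodule.smul_mem _ _ ?_)
    by_cases hj : Function.Injective j
    · set σ := Tuple.sort j with hσdef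
      have hmono : Monotone (j ∘ σ) := Tuple.monotone_sort j
      have hsm : StrictMono (j ∘ σ) := hmono.strictMono_of_injective (hj.comp σ.injective)
      have hgen : (ExteriorAlgebra.ιMulti K 3 fun k => b ((j ∘ σ) k)) ∈
          Submodule.span K (Set.range fun j' : {j' : Fin 3 → Fin n //
            StrictMono j'} => (ExteriorAlgebra.ιMulti K 3 fun k => b (j'.1 k))) :=
        Submodule.subset_span ⟨⟨j ∘ σ, hsm⟩, rfl⟩
      have key : (ExteriorAlgebra.ιMulti K 3 fun k => b ((j ∘ σ) k))
          = Equiv.Perm.sign σ • ExteriorAlgebra.ιMulti K 3 (fun k => b (j k)) := by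
        have := AlternatingMap.map_perm (ExteriorAlgebra.ιMulti K 3 (M := V))
          (fun k => b (j k)) σ
        exact this
      rcases Int.units_eq_one_or (Equiv.Perm.sign σ) with h | h
      · rw [h, one_smul] at key
        rw [← key]; exact hgen
      · rw [h] at key
        have h2 : ExteriorAlgebra.ιMulti K 3 (fun k => b (j k))
            = - (ExteriorAlgebra.ιMulti K 3 fun k => b ((j ∘ σ) k)) := by
          rw [key]; simp
        rw [h2]
        exact neg_mem hgen
    · have hni : ¬ Function.Injective (fun k => b (j k)) := by
        intro hinj
        exact hj (fun x y hxy => hinj (by simp [hxy]))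
      rw [AlternatingMap.map_eq_zero_of_not_injective _ _ hni]
      exact zero_mem _
  have hspanW : Submodule.span K (Set.range fun j : {j : Fin 3 → Fin n //
      StrictMono j} => w j.1) = ⊤ := by
    apply Submodule.map_injective_of_injective (Submodule.injective_subtype (⋀[K]^3 V))
    rw [Submodule.map_span, Submodule.map_top, Submodule.range_subtype, ← Set.range_comp]
    have himg : ((⋀[K]^3 V).subtype ∘ fun j : {j : Fin 3 → Fin n //
        StrictMono j} => w j.1)
        = fun j : {j : Fin 3 → Fin n // StrictMono j} =>
          (ExteriorAlgebra.ιMulti K 3 fun k => b (j.1 k)) := rfl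
    rw [himg]
    refine le_antisymm (Submodule.span_le.2 ?_) hWle
    rintro _ ⟨j, rfl⟩
    exact ExteriorAlgebra.ιMulti_range K 3 (Set.mem_range_self _)
  -- the eigenspace is inside the span of the wedges of eigenvalue t
  have hE := eig_le_span (fun j : {j : Fin 3 → Fin n // StrictMono j} => w j.1)
    (fun j => ∏ k, c (j.1 k)) (exteriorPower.mapOld 3 f) (fun j => heig j.1) hspanW t
  haveI : Module.Finite K (Submodule.span K
      ((fun j : {j : Fin 3 → Fin n // StrictMono j} => w j.1) ''
        {j | (∏ k, c (j.1 k)) = t})) :=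
    FiniteDimensional.span_of_finite K (Set.toFinite _)
  have hdim1 : Module.finrank K (Module.End.eigenspace (exteriorPower.mapOld 3 f) t)
      ≤ Module.finrank K (Submodule.span K
        ((fun j : {j : Fin 3 → Fin n // StrictMono j} => w j.1) ''
          {j | (∏ k, c (j.1 k)) = t})) :=
    Submodule.finrank_mono hE
  have hdim2 : Module.finrank K (Submodule.span K
      ((fun j : {j : Fin 3 → Fin n // StrictMono j} => w j.1) ''
        {j | (∏ k, c (j.1 k)) = t}))
      ≤ Fintype.card {j : {j : Fin 3 → Fin n // StrictMono j} //
        (∏ k, c (j.1 k)) = t} := by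
    rw [Set.image_eq_range]
    exact finrank_range_le_card _
  -- counting: 6 * (number of monotone wedges) ≤ number of ordered triples
  set m := Fintype.card {j : {j : Fin 3 → Fin n // StrictMono j} //
    (∏ k, c (j.1 k)) = t} with hmdef
  have h6m : 6 * m ≤ Fintype.card {j : Fin 3 → Fin n // (∏ k, c (j k)) = t} := by
    let Φ : Equiv.Perm (Fin 3) × {j : {j : Fin 3 → Fin n // StrictMono j} //
        (∏ k, c (j.1 k)) = t} → {j : Fin 3 → Fin n // (∏ k, c (j k)) = t} :=
      fun x => ⟨x.2.1.1 ∘ x.1, by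
        rw [show (∏ k, c ((x.2.1.1 ∘ x.1) k)) = ∏ k, c (x.2.1.1 (x.1 k)) from rfl,
          Equiv.prod_comp x.1 (fun k => c (x.2.1.1 k))]
        exact x.2.2⟩
    have hΦinj : Function.Injective Φ := by
      rintro ⟨σ₁, j₁⟩ ⟨σ₂, j₂⟩ h
      have h' : j₁.1.1 ∘ σ₁ = j₂.1.1 ∘ σ₂ := congrArg Subtype.val h
      have hcomp : ∀ x, j₂.1.1 (σ₂ (σ₁.symm x)) = j₁.1.1 x := by
        intro x
        have := congrFun h' (σ₁.symm x)
        simpa using this.symm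
      have hτsm : StrictMono (fun x => σ₂ (σ₁.symm x)) := by
        intro x y hxy
        have h1 : j₁.1.1 x < j₁.1.1 y := j₁.1.2 hxy
        rw [← hcomp x, ← hcomp y] at h1
        exact (j₂.1.2.lt_iff_lt).1 h1
      have hτsurj : Function.Surjective (fun x => σ₂ (σ₁.symm x)) :=
        σ₂.surjective.comp σ₁.symm.surjective
      haveI : WellFoundedLT (Fin 3) := Finite.to_wellFoundedLT
      have hτid : (fun x => σ₂ (σ₁.symm x)) = id := by
        apply (hτsm.range_inj strictMono_id).1
        rw [hτsurj.range_eq, Set.range_id]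
      have hσ : σ₂ = σ₁ := Equiv.ext fun y => by simpa using congrFun hτid (σ₁ y)
      have hj : j₁ = j₂ := by
        apply Subtype.ext; apply Subtype.ext
        funext x
        rw [← hcomp x, hσ]
        simp
      rw [hσ, hj]
    have hcard6 : Fintype.card (Equiv.Perm (Fin 3)) = 6 := by
      rw [Fintype.card_perm, Fintype.card_fin]
      rfl
    have := Fintype.card_le_of_injective Φ hΦinj
    rwa [Fintype.card_prod, hcard6] at this
  -- number of ordered triples ≤ n * S
  have hT : Fintype.card {j : Fin 3 → Fin n // (∏ k, c (j k)) = t} ≤ n * S := by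
    have eT : {j : Fin 3 → Fin n // (∏ k, c (j k)) = t}
        ≃ Σ i : Fin n, {p : Fin n × Fin n // c i * (c p.1 * c p.2) = t} :=
      { toFun := fun j => ⟨j.1 0, ⟨(j.1 1, j.1 2), by
          have := j.2; rwa [Fin.prod_univ_three, mul_assoc] at this⟩⟩
        invFun := fun x => ⟨![x.1, x.2.1.1, x.2.1.2], by
          rw [Fin.prod_univ_three]
          simpa [mul_assoc] using x.2.2⟩
        left_inv := fun j => Subtype.ext (by
          funext k; fin_cases k <;> rfl)
        right_inv := fun x => rfl }
    have hc2 : Fintype.card {j : Fin 3 → Fin n // (∏ k, c (j k)) = t}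
        = ∑ i : Fin n, Fintype.card {p : Fin n × Fin n // c i * (c p.1 * c p.2) = t} := by
      rw [← Fintype.card_sigma]
      exact Fintype.card_congr eT
    rw [hc2]
    have hle : ∀ i : Fin n, Fintype.card {p : Fin n × Fin n // c i * (c p.1 * c p.2) = t}
        ≤ S := by
      intro i
      have he : {p : Fin n × Fin n // c i * (c p.1 * c p.2) = t}
          ≃ {p : Fin n × Fin n // c p.1 * c p.2 = (c i)⁻¹ * t} :=
        Equiv.subtypeEquivRight (fun p => by
          constructor
          · intro h; rw [← h, inv_mul_cancel_left₀ (hc0' i)]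
          · intro h; rw [h, mul_inv_cancel_left₀ (hc0' i)])
      rw [Fintype.card_congr he]
      exact hpair ((c i)⁻¹ * t)
    calc ∑ i : Fin n, Fintype.card {p : Fin n × Fin n // c i * (c p.1 * c p.2) = t}
        ≤ ∑ _i : Fin n, S := Finset.sum_le_sum (fun i _ => hle i)
      _ = n * S := by rw [Finset.sum_const, smul_eq_mul, Finset.card_univ, Fintype.card_fin]
  calc 6 * Module.finrank K (Module.End.eigenspace (exteriorPower.mapOld 3 f) t)
      ≤ 6 * m := Nat.mul_le_mul_left 6 (hdim1.trans hdim2)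
    _ ≤ Fintype.card {j : Fin 3 → Fin n // (∏ k, c (j k)) = t} := h6m
    _ ≤ n * S := hT
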